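/- Let S be a finite meet-closed set and x_i ∈ S generating a double-chain set with chains A_i, B_i, and suppose exactly one element x_p ∈ C_S(x_i) attaches to both chains. Let x_a, x_b be the top elements of A_i, B_i and η(x_k) the number of elements of C_S(x_i) attached to x_k. Then μ_S(x_i,x_i)=1; μ_S(x_j,x_i)=−1 for x_j ∈ C_S(x_i); μ_S(x_j,x_i)=η(x_j)−1 for x_j ∈ {x_a, x_b}; μ_S(x_j,x_i)=η(x_j) for x_j ∈ A_i ∪ B_i with x_j ∉ {x_a, x_b}; and μ_S(x_j,x_i)=0 otherwise. -/

import Mathlib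

open scoped Classical

/-- `y` is covered by `x` in the induced order on `T`. -/
def coversIn {α : Type*} [SemilatticeInf α] (T : Set α) (y x : α) : Prop :=
  y ∈ T ∧ x ∈ T ∧ y < x ∧ ∀ z ∈ T, ¬(y < z ∧ z < x)

/-- The set of elements of `S` covered by `x` in `S`. -/
def CSet {α : Type*} [SemilatticeInf α] (S : Set α) (x : α) : Set α :=
  {y | coversIn S y x}

/-- The meet closure of `T`: all finite meets of elements of `T`. -/
def meetcl {α : Type*} [SemilatticeInf α] (T : Set α) : Set α :=
  {y | ∃ F : Finset α, ∃ h : F.Nonempty, ↑F ⊆ T ∧ y = F.inf' h id}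

lemma mem_meetcl_self' {α : Type*} [SemilatticeInf α] {T : Set α} {y : α} (hy : y ∈ T) :
    y ∈ meetcl T :=
  ⟨{y}, Finset.singleton_nonempty y, by simpa using hy, by simp⟩

lemma meetcl_le' {α : Type*} [SemilatticeInf α] {T : Set α} {m : α} (hm : m ∈ meetcl T) :
    ∃ c ∈ T, m ≤ c := by
  obtain ⟨F, hF, hFT, rfl⟩ := hm
  obtain ⟨c, hc⟩ := hF
  exact ⟨c, hFT (Finset.mem_coe.mpr hc), Finset.inf'_le id hc⟩

lemma meetcl_subset' {α : Type*} [SemilatticeInf α] {S : Finset α}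
    (hmeet : ∀ x ∈ S, ∀ y ∈ S, x ⊓ y ∈ S) {T : Set α} (hT : T ⊆ ↑S) :
    meetcl T ⊆ (↑S : Set α) := by
  rintro m ⟨F, hF, hFT, rfl⟩
  exact Finset.inf'_mem (↑S : Set α)
    (fun x hx y hy => by simpa using hmeet x (by simpa using hx) y (by simpa using hy))
    F hF id (fun i hi => by exact hT (hFT (Finset.mem_coe.mpr hi)))

lemma meetcl_inf' {α : Type*} [SemilatticeInf α] {T : Set α} {m m' : α}
    (hm : m ∈ meetcl T) (hm' : m' ∈ meetcl T) : m ⊓ m' ∈ meetcl T := by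
  classical
  obtain ⟨F, hF, hFT, rfl⟩ := hm
  obtain ⟨F', hF', hFT', rfl⟩ := hm'
  refine ⟨F ∪ F', ⟨hF.choose, Finset.mem_union_left _ hF.choose_spec⟩, ?_, ?_⟩
  · rw [Finset.coe_union]; exact Set.union_subset hFT hFT'
  · rw [Finset.inf'_union hF hF']

lemma exists_coversIn_between' {α : Type*} [SemilatticeInf α] (S : Finset α) {T : Set α}
    (hTS : T ⊆ ↑S) {v u : α} (hv : v ∈ T) (hu : u ∈ T) (hvu : v < u) :
    ∃ w, w ∈ T ∧ v ≤ w ∧ coversIn T w u := by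
  classical
  have hne : (S.filter (fun w => w ∈ T ∧ v ≤ w ∧ w < u)).Nonempty :=
    ⟨v, Finset.mem_filter.mpr ⟨Finset.mem_coe.mp (hTS hv), hv, le_refl v, hvu⟩⟩
  obtain ⟨m, hmF, hmax'⟩ := Finset.exists_maximal hne
  have hmax : ∀ z ∈ S.filter (fun w => w ∈ T ∧ v ≤ w ∧ w < u), ¬ m < z :=
    fun z hz h => lt_irrefl _ (lt_of_lt_of_le h (hmax' hz h.le))
  rw [Finset.mem_filter] at hmF
  refine ⟨m, hmF.2.1, hmF.2.2.1, hmF.2.1, hu, hmF.2.2.2, fun z hz hcon => ?_⟩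
  exact hmax z (Finset.mem_filter.mpr ⟨Finset.mem_coe.mp (hTS hz), hz,
    le_of_lt (lt_of_le_of_lt hmF.2.2.1 hcon.1), hcon.2⟩) hcon.1

theorem stmt5 {α : Type*} [SemilatticeInf α] [LocallyFiniteOrder α]
    (S : Finset α) (hmeet : ∀ x ∈ S, ∀ y ∈ S, x ⊓ y ∈ S)
    (xi : α) (hxi : xi ∈ S)
    (A B : Set α) (hdisj : Disjoint A B)
    (hchA : IsChain (· ≤ ·) A) (hchB : IsChain (· ≤ ·) B)
    (hAB : meetcl (CSet (↑S : Set α) xi) \ CSet (↑S : Set α) xi = A ∪ B)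
    -- exactly one element `x_p` of `C_S(x_i)` attaches to both chains
    (xp : α) (hxp : xp ∈ CSet (↑S : Set α) xi)
    (hxpA : ∃ xq ∈ A, coversIn (meetcl (CSet (↑S : Set α) xi)) xq xp)
    (hxpB : ∃ xr ∈ B, coversIn (meetcl (CSet (↑S : Set α) xi)) xr xp)
    (huniq : ∀ z ∈ CSet (↑S : Set α) xi,
      (∃ a ∈ A, coversIn (meetcl (CSet (↑S : Set α) xi)) a z) →
      (∃ b ∈ B, coversIn (meetcl (CSet (↑S : Set α) xi)) b z) → z = xp)
    -- top elements of the chains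
    (xa xb : α)
    (hxa : xa ∈ A ∧ ∀ a ∈ A, a ≤ xa)
    (hxb : xb ∈ B ∧ ∀ b ∈ B, b ≤ xb)
    -- the Möbius function of the poset `S`
    (mu : α → α → ℤ)
    (hmu1 : ∀ a, mu a a = 1)
    (hmu2 : ∀ y ∈ S, ∀ x ∈ S, y < x →
      mu y x = -∑ z ∈ S.filter (fun z => y < z ∧ z ≤ x), mu z x)
    (hmu0 : ∀ y x : α, ¬y ≤ x → mu y x = 0)
    -- the number of elements of `C_S(x_i)` attached to `k`
    (η : α → ℤ)
    (hη : ∀ k, η k =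
      ({z ∈ CSet (↑S : Set α) xi |
        coversIn (meetcl (CSet (↑S : Set α) xi)) k z}.ncard : ℤ)) :
    mu xi xi = 1 ∧
    (∀ xj ∈ CSet (↑S : Set α) xi, mu xj xi = -1) ∧
    (∀ xj, (xj = xa ∨ xj = xb) → mu xj xi = η xj - 1) ∧
    (∀ xj ∈ A ∪ B, xj ≠ xa → xj ≠ xb → mu xj xi = η xj) ∧
    (∀ xj ∈ S, xj ≠ xi → xj ∉ meetcl (CSet (↑S : Set α) xi) → mu xj xi = 0) := by
  classical
  obtain ⟨hxa1, hxa2⟩ := hxa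
  obtain ⟨hxb1, hxb2⟩ := hxb
  obtain ⟨xq, hxqA, hxqcov⟩ := hxpA
  obtain ⟨xr, hxrB, hxrcov⟩ := hxpB
  set Cs := CSet (↑S : Set α) xi with hCsdef
  set M := meetcl Cs with hMdef
  -- basic facts
  have hCsS : Cs ⊆ (↑S : Set α) := fun y hy => hy.1
  have hMS : M ⊆ (↑S : Set α) := meetcl_subset' hmeet hCsS
  have hCM : Cs ⊆ M := fun y hy => mem_meetcl_self' hy
  have hCslt : ∀ y ∈ Cs, y < xi := fun y hy => hy.2.2.1
  have hMlt : ∀ m ∈ M, m < xi := by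
    intro m hm
    obtain ⟨c, hc, hmc⟩ := meetcl_le' hm
    exact lt_of_le_of_lt hmc (hCslt c hc)
  have hanti : ∀ c ∈ Cs, ∀ c' ∈ Cs, ¬ c < c' := by
    intro c hc c' hc' hlt
    exact hc.2.2.2 c' (hCsS hc') ⟨hlt, hCslt c' hc'⟩
  have hmaxM : ∀ c ∈ Cs, ∀ m ∈ M, ¬ c < m := by
    intro c hc m hm hlt
    obtain ⟨c', hc', hmc'⟩ := meetcl_le' hm
    exact hanti c hc c' hc' (lt_of_lt_of_le hlt hmc')
  have hABiff : ∀ y : α, y ∈ A ∪ B ↔ y ∈ M ∧ y ∉ Cs := by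
    intro y
    rw [← hAB]
    exact Iff.rfl
  have hAM : ∀ a ∈ A, a ∈ M ∧ a ∉ Cs := fun a ha => (hABiff a).mp (Or.inl ha)
  have hBM : ∀ b ∈ B, b ∈ M ∧ b ∉ Cs := fun b hb => (hABiff b).mp (Or.inr hb)
  have hxpM : xp ∈ M := hCM hxp
  have hxqlt : xq < xp := hxqcov.2.2.1
  have hxrlt : xr < xp := hxrcov.2.2.1
  have hqr_ne : xq ≠ xr := fun h => (Set.disjoint_left.mp hdisj hxqA) (h ▸ hxrB)
  have hab_ne : xa ≠ xb := fun h => (Set.disjoint_left.mp hdisj hxa1) (h ▸ hxb1)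
  have hmeetM : ∀ m ∈ M, ∀ m' ∈ M, m ⊓ m' ∈ M := fun m hm m' hm' => meetcl_inf' hm hm'
  have hmeet_xp : ∀ y ∈ M, y ∉ Cs → ∀ s ∈ A ∪ B, coversIn M s xp → s ≤ y → y ⊓ xp = s := by
    intro y hy hyC s _hsAB hscov hsy
    have h1 : y ⊓ xp ∈ M := hmeetM y hy xp hxpM
    have h2 : y ⊓ xp ≤ xp := inf_le_right
    have hyxp : ¬ xp ≤ y := by
      intro hle
      have hne : xp ≠ y := fun h => hyC (h ▸ hxp)
      exact hxp.2.2.2 y (hMS hy) ⟨lt_of_le_of_ne hle hne, hMlt y hy⟩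
    have h3 : y ⊓ xp ≠ xp := fun h => hyxp (h ▸ inf_le_left)
    have h4 : s ≤ y ⊓ xp := le_inf hsy (le_of_lt hscov.2.2.1)
    by_contra hne
    exact hscov.2.2.2 (y ⊓ xp) h1
      ⟨lt_of_le_of_ne h4 (fun h => hne h.symm), lt_of_le_of_ne h2 h3⟩
  have hE_r : xb ⊓ xp = xr :=
    hmeet_xp xb (hBM xb hxb1).1 (hBM xb hxb1).2 xr (Or.inr hxrB) hxrcov (hxb2 xr hxrB)
  have hE_q : xa ⊓ xp = xq :=
    hmeet_xp xa (hAM xa hxa1).1 (hAM xa hxa1).2 xq (Or.inl hxqA) hxqcov (hxa2 xq hxqA)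
  have P4A : ∀ v ∈ A, v ≤ xb → v ≤ xq ∧ v ≤ xr := by
    intro v hvA hvxb
    have hvM := (hAM v hvA).1
    have hvC := (hAM v hvA).2
    have hvq : v ≤ xq := by
      by_contra hnot
      have hne : xq ≠ v := fun h => hnot (le_of_eq h.symm)
      have hqv : xq < v := by
        rcases hchA hxqA hvA hne with h | h
        · exact lt_of_le_of_ne h hne
        · exact absurd h hnot
      have h5 : v ⊓ xp = xq :=
        hmeet_xp v hvM hvC xq (Or.inl hxqA) hxqcov (le_of_lt hqv)
      have h6 : xq ≤ xr := by
        rw [← h5, ← hE_r]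
        exact inf_le_inf_right xp hvxb
      exact hxqcov.2.2.2 xr (hBM xr hxrB).1 ⟨lt_of_le_of_ne h6 hqr_ne, hxrlt⟩
    refine ⟨hvq, ?_⟩
    rw [← hE_r]
    exact le_inf hvxb (le_trans hvq (le_of_lt hxqlt))
  have P4B : ∀ v ∈ B, v ≤ xa → v ≤ xq ∧ v ≤ xr := by
    intro v hvB hvxa
    have hvM := (hBM v hvB).1
    have hvC := (hBM v hvB).2
    have hvr : v ≤ xr := by
      by_contra hnot
      have hne : xr ≠ v := fun h => hnot (le_of_eq h.symm)
      have hrv : xr < v := by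
        rcases hchB hxrB hvB hne with h | h
        · exact lt_of_le_of_ne h hne
        · exact absurd h hnot
      have h5 : v ⊓ xp = xr :=
        hmeet_xp v hvM hvC xr (Or.inr hxrB) hxrcov (le_of_lt hrv)
      have h6 : xr ≤ xq := by
        rw [← h5, ← hE_q]
        exact inf_le_inf_right xp hvxa
      exact hxrcov.2.2.2 xq (hAM xq hxqA).1
        ⟨lt_of_le_of_ne h6 (fun h => hqr_ne h.symm), hxqlt⟩
    refine ⟨?_, hvr⟩
    rw [← hE_q]
    exact le_inf hvxa (le_trans hvr (le_of_lt hxrlt))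
  have huniq_chain : ∀ {X : Set α}, IsChain (· ≤ ·) X → ∀ c : α, ∀ w1 ∈ X, ∀ w2 ∈ X,
      coversIn M w1 c → coversIn M w2 c → w1 = w2 := by
    intro X hch c w1 hw1 w2 hw2 hc1 hc2
    by_contra hne
    rcases hch hw1 hw2 hne with h | h
    · exact hc1.2.2.2 w2 hc2.1 ⟨lt_of_le_of_ne h hne, hc2.2.2.1⟩
    · exact hc2.2.2.2 w1 hc1.1 ⟨lt_of_le_of_ne h (Ne.symm hne), hc1.2.2.1⟩
  have hxp_attach : ∀ w ∈ A ∪ B, coversIn M w xp → w = xq ∨ w = xr := by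
    intro w hw hcov
    rcases hw with h | h
    · exact Or.inl (huniq_chain hchA xp w h xq hxqA hcov hxqcov)
    · exact Or.inr (huniq_chain hchB xp w h xr hxrB hcov hxrcov)
  -- Finset versions
  set CF := S.filter (fun y => y ∈ Cs) with hCFdef
  set MF := S.filter (fun y => y ∈ M) with hMFdef
  set ABF := S.filter (fun y => y ∈ M ∧ y ∉ Cs) with hABFdef
  have memCF : ∀ y : α, y ∈ CF ↔ y ∈ Cs := by
    intro y
    rw [hCFdef, Finset.mem_filter]
    exact ⟨fun h => h.2, fun h => ⟨Finset.mem_coe.mp (hCsS h), h⟩⟩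
  have memMF : ∀ y : α, y ∈ MF ↔ y ∈ M := by
    intro y
    rw [hMFdef, Finset.mem_filter]
    exact ⟨fun h => h.2, fun h => ⟨Finset.mem_coe.mp (hMS h), h⟩⟩
  have memABF : ∀ y : α, y ∈ ABF ↔ y ∈ M ∧ y ∉ Cs := by
    intro y
    rw [hABFdef, Finset.mem_filter]
    exact ⟨fun h => h.2, fun h => ⟨Finset.mem_coe.mp (hMS h.1), h⟩⟩
  have hηF : ∀ k : α, η k = (((CF.filter (fun z => coversIn M k z)).card : ℤ)) := by
    intro k
    have hset : {z | z ∈ Cs ∧ coversIn M k z}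
        = (↑(CF.filter (fun z => coversIn M k z)) : Set α) := by
      ext z
      simp only [Set.mem_setOf_eq, Finset.coe_filter]
      constructor
      · rintro ⟨h1, h2⟩
        exact ⟨(memCF z).mpr h1, h2⟩
      · rintro ⟨h1, h2⟩
        exact ⟨(memCF z).mp h1, h2⟩
    rw [hη k, hset, Set.ncard_coe_finset]
  set g : α → ℤ := fun w => if w ∈ Cs then -1 else η w - (if w = xa ∨ w = xb then 1 else 0)
    with hgdef
  have COUNT : ∀ v, v ∈ M → v ∉ Cs →
      ∑ w ∈ ABF.filter (fun w => v ≤ w), (CF.filter (fun z => coversIn M w z)).card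
        = (CF.filter (fun c => v < c)).card + (if v ≤ xq ∧ v ≤ xr then 1 else 0) := by
    intro v hvM hvC
    have hswap : ∑ w ∈ ABF.filter (fun w => v ≤ w), (CF.filter (fun z => coversIn M w z)).card
        = ∑ c ∈ CF, ((ABF.filter (fun w => v ≤ w)).filter (fun w => coversIn M w c)).card := by
      simp_rw [Finset.card_filter]
      exact Finset.sum_comm
    rw [hswap]
    have hrestrict : ∑ c ∈ CF, ((ABF.filter (fun w => v ≤ w)).filter
          (fun w => coversIn M w c)).card
        = ∑ c ∈ CF.filter (fun c => v < c), ((ABF.filter (fun w => v ≤ w)).filter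
          (fun w => coversIn M w c)).card := by
      refine (Finset.sum_subset (Finset.filter_subset _ _) ?_).symm
      intro c _hc hcns
      rw [Finset.card_eq_zero, Finset.filter_eq_empty_iff]
      intro w hw
      rw [Finset.mem_filter] at hw
      intro hcov
      exact hcns (Finset.mem_filter.mpr ⟨_hc, lt_of_le_of_lt hw.2 hcov.2.2.1⟩)
    rw [hrestrict]
    have hfib : ∀ c ∈ CF.filter (fun c => v < c),
        ((ABF.filter (fun w => v ≤ w)).filter (fun w => coversIn M w c)).card
          = 1 + (if c = xp ∧ (v ≤ xq ∧ v ≤ xr) then 1 else 0) := by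
      intro c hc
      rw [Finset.mem_filter] at hc
      obtain ⟨hcCF, hvc⟩ := hc
      have hcCs : c ∈ Cs := (memCF c).mp hcCF
      obtain ⟨w, hwM, hvw, hwcov⟩ := exists_coversIn_between' S hMS hvM (hCM hcCs) hvc
      have hwC : w ∉ Cs := fun h => hanti w h c hcCs hwcov.2.2.1
      have hwAB : w ∈ A ∪ B := (hABiff w).mpr ⟨hwM, hwC⟩
      have hwmem : w ∈ (ABF.filter (fun w => v ≤ w)).filter (fun w => coversIn M w c) :=
        Finset.mem_filter.mpr ⟨Finset.mem_filter.mpr ⟨(memABF w).mpr ⟨hwM, hwC⟩, hvw⟩, hwcov⟩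
      have helem : ∀ u ∈ (ABF.filter (fun w => v ≤ w)).filter (fun w => coversIn M w c),
          u ∈ A ∪ B ∧ v ≤ u ∧ coversIn M u c := by
        intro u hu
        rw [Finset.mem_filter, Finset.mem_filter] at hu
        exact ⟨(hABiff u).mpr ((memABF u).mp hu.1.1), hu.1.2, hu.2⟩
      by_cases hcp : c = xp
      · subst hcp
        by_cases hP : v ≤ xq ∧ v ≤ xr
        · have heq : (ABF.filter (fun w => v ≤ w)).filter (fun w => coversIn M w c)
              = {xq, xr} := by
            ext u
            rw [Finset.mem_filter, Finset.mem_filter, Finset.mem_insert, Finset.mem_singleton]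
            constructor
            · intro hu
              exact hxp_attach u ((hABiff u).mpr ((memABF u).mp hu.1.1)) hu.2
            · rintro (rfl | rfl)
              · exact ⟨⟨(memABF u).mpr ⟨(hAM u hxqA).1, (hAM u hxqA).2⟩, hP.1⟩, hxqcov⟩
              · exact ⟨⟨(memABF u).mpr ⟨(hBM u hxrB).1, (hBM u hxrB).2⟩, hP.2⟩, hxrcov⟩
          rw [heq, if_pos ⟨rfl, hP⟩, Finset.card_insert_of_notMem (by
            rw [Finset.mem_singleton]; exact hqr_ne), Finset.card_singleton]
        · rw [if_neg (by rintro ⟨-, h⟩; exact hP h), Finset.card_eq_one]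
          refine ⟨w, ?_⟩
          ext u
          rw [Finset.mem_singleton]
          constructor
          · intro hu
            obtain ⟨huAB, hvu, hucov⟩ := helem u hu
            have hu2 := hxp_attach u huAB hucov
            have hw2 := hxp_attach w hwAB hwcov
            rcases hu2 with h1 | h1 <;> rcases hw2 with h2 | h2
            · rw [h1, h2]
            · exact absurd ⟨h1 ▸ hvu, h2 ▸ hvw⟩ hP
            · exact absurd ⟨h2 ▸ hvw, h1 ▸ hvu⟩ hP
            · rw [h1, h2]
          · rintro rfl
            exact hwmem
      · rw [if_neg (by rintro ⟨h, -⟩; exact hcp h), Finset.card_eq_one]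
        refine ⟨w, ?_⟩
        ext u
        rw [Finset.mem_singleton]
        constructor
        · intro hu
          obtain ⟨huAB, hvu, hucov⟩ := helem u hu
          rcases huAB with h1 | h1 <;> rcases hwAB with h2 | h2
          · exact huniq_chain hchA c u h1 w h2 hucov hwcov
          · exact absurd (huniq c hcCs ⟨u, h1, hucov⟩ ⟨w, h2, hwcov⟩) hcp
          · exact absurd (huniq c hcCs ⟨w, h2, hwcov⟩ ⟨u, h1, hucov⟩) hcp
          · exact huniq_chain hchB c u h1 w h2 hucov hwcov
        · rintro rfl
          exact hwmem
    rw [Finset.sum_congr rfl hfib, Finset.sum_add_distrib, Finset.sum_const, smul_eq_mul,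
      mul_one]
    congr 1
    by_cases hP : v ≤ xq ∧ v ≤ xr
    · have hxpK : xp ∈ CF.filter (fun c => v < c) :=
        Finset.mem_filter.mpr ⟨(memCF xp).mpr hxp, lt_of_le_of_lt hP.1 hxqlt⟩
      have hcond : ∀ c : α, (if c = xp ∧ (v ≤ xq ∧ v ≤ xr) then (1:ℕ) else 0)
          = (if c = xp then 1 else 0) := by
        intro c
        by_cases h : c = xp <;> simp [h, hP]
      simp only [hcond]
      rw [Finset.sum_ite_eq' (CF.filter (fun c => v < c)) xp (fun _ => 1), if_pos hxpK,
        if_pos hP]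
    · have : ∀ c ∈ CF.filter (fun c => v < c),
          (if c = xp ∧ (v ≤ xq ∧ v ≤ xr) then 1 else 0) = 0 := by
        intro c _
        rw [if_neg (by rintro ⟨-, h⟩; exact hP h)]
      rw [Finset.sum_congr rfl this, Finset.sum_const, smul_eq_mul, mul_zero, if_neg hP]
  have SUM : ∀ v ∈ M, ∑ w ∈ MF.filter (fun w => v ≤ w), g w = -1 := by
    intro v hvM
    by_cases hvC : v ∈ Cs
    · have heq : MF.filter (fun w => v ≤ w) = {v} := by
        ext w
        rw [Finset.mem_filter, Finset.mem_singleton]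
        constructor
        · rintro ⟨hwMF, hvw⟩
          rcases eq_or_lt_of_le hvw with h | h
          · exact h.symm
          · exact absurd h (hmaxM v hvC w ((memMF w).mp hwMF))
        · rintro rfl
          exact ⟨(memMF _).mpr hvM, le_refl _⟩
      rw [heq, Finset.sum_singleton, hgdef]
      simp [hvC]
    · have hvAB : v ∈ A ∪ B := (hABiff v).mpr ⟨hvM, hvC⟩
      have hsplit : MF.filter (fun w => v ≤ w)
          = (CF.filter (fun c => v < c)) ∪ (ABF.filter (fun w => v ≤ w)) := by
        ext w
        constructor
        · intro hw
          obtain ⟨hwMF, hvw⟩ := Finset.mem_filter.mp hw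
          have hwM := (memMF w).mp hwMF
          refine Finset.mem_union.mpr ?_
          by_cases hwCs : w ∈ Cs
          · exact Or.inl (Finset.mem_filter.mpr ⟨(memCF w).mpr hwCs,
              lt_of_le_of_ne hvw (fun h => hvC (h ▸ hwCs))⟩)
          · exact Or.inr (Finset.mem_filter.mpr ⟨(memABF w).mpr ⟨hwM, hwCs⟩, hvw⟩)
        · intro hw
          rcases Finset.mem_union.mp hw with hw' | hw'
          · obtain ⟨hwCF, hvw⟩ := Finset.mem_filter.mp hw'
            exact Finset.mem_filter.mpr ⟨(memMF w).mpr (hCM ((memCF w).mp hwCF)), le_of_lt hvw⟩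
          · obtain ⟨hwABF, hvw⟩ := Finset.mem_filter.mp hw'
            exact Finset.mem_filter.mpr ⟨(memMF w).mpr ((memABF w).mp hwABF).1, hvw⟩
      have hdisj2 : Disjoint (CF.filter (fun c => v < c)) (ABF.filter (fun w => v ≤ w)) := by
        rw [Finset.disjoint_left]
        intro u hu1 hu2
        exact ((memABF u).mp (Finset.mem_filter.mp hu2).1).2
          ((memCF u).mp (Finset.mem_filter.mp hu1).1)
      rw [hsplit, Finset.sum_union hdisj2]
      have h1 : ∑ c ∈ CF.filter (fun c => v < c), g c
          = -(((CF.filter (fun c => v < c)).card : ℤ)) := by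
        have hgc : ∀ c ∈ CF.filter (fun c => v < c), g c = -1 := by
          intro c hc
          rw [hgdef]
          simp [(memCF c).mp (Finset.mem_filter.mp hc).1]
        rw [Finset.sum_congr rfl hgc, Finset.sum_const, nsmul_eq_mul]
        ring
      have h2 : ∑ w ∈ ABF.filter (fun w => v ≤ w), g w
          = ((CF.filter (fun c => v < c)).card : ℤ) + (if v ≤ xq ∧ v ≤ xr then 1 else 0)
            - ((if v ≤ xa then 1 else 0) + (if v ≤ xb then 1 else 0)) := by
        have hgw : ∀ w ∈ ABF.filter (fun w => v ≤ w),
            g w = η w - (if w = xa ∨ w = xb then 1 else 0) := by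
          intro w hw
          rw [hgdef]
          simp only []
          rw [if_neg ((memABF w).mp (Finset.mem_filter.mp hw).1).2]
        rw [Finset.sum_congr rfl hgw, Finset.sum_sub_distrib]
        congr 1
        · have hcast : ∀ w ∈ ABF.filter (fun w => v ≤ w),
              η w = (((CF.filter (fun z => coversIn M w z)).card : ℤ)) :=
            fun w _ => hηF w
          rw [Finset.sum_congr rfl hcast, ← Nat.cast_sum, COUNT v hvM hvC]
          by_cases hP : v ≤ xq ∧ v ≤ xr <;> simp [hP]
        · have hsplitite : ∀ w : α, (if w = xa ∨ w = xb then (1:ℤ) else 0)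
              = (if w = xa then 1 else 0) + (if w = xb then 1 else 0) := by
            intro w
            by_cases h1 : w = xa <;> by_cases h2 : w = xb
            · exact absurd (h1 ▸ h2) hab_ne
            · simp [h1, h2, hab_ne]
            · simp [h1, h2, Ne.symm hab_ne]
            · simp [h1, h2]
          rw [Finset.sum_congr rfl (fun w _ => hsplitite w), Finset.sum_add_distrib]
          have hmema : ∀ t : α, t ∈ A ∪ B → (t ∈ ABF.filter (fun w => v ≤ w) ↔ v ≤ t) := by
            intro t ht
            rw [Finset.mem_filter]
            exact ⟨fun h => h.2, fun h => ⟨(memABF t).mpr ((hABiff t).mp ht), h⟩⟩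
          congr 1
          · rw [Finset.sum_ite_eq' (ABF.filter (fun w => v ≤ w)) xa (fun _ => (1:ℤ))]
            by_cases hva : v ≤ xa
            · rw [if_pos ((hmema xa (Or.inl hxa1)).mpr hva), if_pos hva]
            · rw [if_neg (fun h => hva ((hmema xa (Or.inl hxa1)).mp h)), if_neg hva]
          · rw [Finset.sum_ite_eq' (ABF.filter (fun w => v ≤ w)) xb (fun _ => (1:ℤ))]
            by_cases hvb : v ≤ xb
            · rw [if_pos ((hmema xb (Or.inr hxb1)).mpr hvb), if_pos hvb]
            · rw [if_neg (fun h => hvb ((hmema xb (Or.inr hxb1)).mp h)), if_neg hvb]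
      rw [h1, h2]
      rcases hvAB with hvA | hvB
      · have hva : v ≤ xa := hxa2 v hvA
        have hD : (v ≤ xq ∧ v ≤ xr) ↔ v ≤ xb :=
          ⟨fun h => le_trans h.2 (hxb2 xr hxrB), fun h => P4A v hvA h⟩
        by_cases hvb : v ≤ xb
        · rw [if_pos (hD.mpr hvb), if_pos hva, if_pos hvb]
          ring
        · rw [if_neg (fun h => hvb (hD.mp h)), if_pos hva, if_neg hvb]
          ring
      · have hvb : v ≤ xb := hxb2 v hvB
        have hD : (v ≤ xq ∧ v ≤ xr) ↔ v ≤ xa :=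
          ⟨fun h => le_trans h.1 (hxa2 xq hxqA), fun h => P4B v hvB h⟩
        by_cases hva : v ≤ xa
        · rw [if_pos (hD.mpr hva), if_pos hva, if_pos hvb]
          ring
        · rw [if_neg (fun h => hva (hD.mp h)), if_neg hva, if_pos hvb]
          ring
  have MAIN : ∀ n : ℕ, ∀ v ∈ S, v < xi → (S.filter (fun w => v < w)).card ≤ n →
      mu v xi = (if v ∈ M then g v else 0) := by
    intro n
    induction n with
    | zero =>
      intro v hv hvxi hcard
      have hmem : xi ∈ S.filter (fun w => v < w) := Finset.mem_filter.mpr ⟨hxi, hvxi⟩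
      have := Finset.card_pos.mpr ⟨xi, hmem⟩
      omega
    | succ n ih =>
      intro v hv hvxi hcard
      rw [hmu2 v hv xi hxi hvxi]
      have hins : S.filter (fun z => v < z ∧ z ≤ xi)
          = insert xi (S.filter (fun z => v < z ∧ z < xi)) := by
        ext z
        rw [Finset.mem_insert, Finset.mem_filter, Finset.mem_filter]
        constructor
        · rintro ⟨hzS, hvz, hzxi⟩
          rcases eq_or_lt_of_le hzxi with h | h
          · exact Or.inl h
          · exact Or.inr ⟨hzS, hvz, h⟩
        · rintro (rfl | ⟨hzS, hvz, h⟩)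
          · exact ⟨hxi, hvxi, le_refl _⟩
          · exact ⟨hzS, hvz, le_of_lt h⟩
      have hnotmem : xi ∉ S.filter (fun z => v < z ∧ z < xi) := by
        rw [Finset.mem_filter]
        rintro ⟨-, -, h⟩
        exact lt_irrefl xi h
      rw [hins, Finset.sum_insert hnotmem, hmu1 xi]
      have hzval : ∀ z ∈ S.filter (fun z => v < z ∧ z < xi),
          mu z xi = (if z ∈ M then g z else 0) := by
        intro z hz'
        obtain ⟨hzS, hvz, hzxi⟩ := Finset.mem_filter.mp hz'
        apply ih z hzS hzxi
        have hsub : S.filter (fun w => z < w) ⊆ S.filter (fun w => v < w) := by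
          intro w hw
          obtain ⟨hwS, hzw⟩ := Finset.mem_filter.mp hw
          exact Finset.mem_filter.mpr ⟨hwS, lt_trans hvz hzw⟩
        have hss : S.filter (fun w => z < w) ⊂ S.filter (fun w => v < w) := by
          refine ⟨hsub, fun hsup => ?_⟩
          have hzmem : z ∈ S.filter (fun w => v < w) := Finset.mem_filter.mpr ⟨hzS, hvz⟩
          exact lt_irrefl z (Finset.mem_filter.mp (hsup hzmem)).2
        have := Finset.card_lt_card hss
        omega
      rw [Finset.sum_congr rfl hzval]
      have hcollapse : ∑ z ∈ S.filter (fun z => v < z ∧ z < xi), (if z ∈ M then g z else 0)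
          = ∑ z ∈ MF.filter (fun z => v < z), g z := by
        rw [← Finset.sum_filter]
        refine Finset.sum_congr ?_ (fun _ _ => rfl)
        ext z
        constructor
        · intro hz'
          obtain ⟨hz1, hzM⟩ := Finset.mem_filter.mp hz'
          obtain ⟨hzS, hvz, -⟩ := Finset.mem_filter.mp hz1
          exact Finset.mem_filter.mpr ⟨(memMF z).mpr hzM, hvz⟩
        · intro hz'
          obtain ⟨hzMF, hvz⟩ := Finset.mem_filter.mp hz'
          have hzM := (memMF z).mp hzMF
          exact Finset.mem_filter.mpr
            ⟨Finset.mem_filter.mpr ⟨Finset.mem_coe.mp (hMS hzM), hvz, hMlt z hzM⟩, hzM⟩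
      rw [hcollapse]
      by_cases hvM : v ∈ M
      · rw [if_pos hvM]
        by_cases hvC : v ∈ Cs
        · have hempty : MF.filter (fun z => v < z) = ∅ := by
            rw [Finset.filter_eq_empty_iff]
            intro z hz'
            exact hmaxM v hvC z ((memMF z).mp hz')
          rw [hempty, Finset.sum_empty, hgdef]
          simp [hvC]
        · have hvMF : v ∈ MF := (memMF v).mpr hvM
          have hins2 : MF.filter (fun w => v ≤ w)
              = insert v (MF.filter (fun w => v < w)) := by
            ext w
            constructor
            · intro hw
              obtain ⟨hwMF, hvw⟩ := Finset.mem_filter.mp hw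
              rcases eq_or_lt_of_le hvw with h | h
              · exact Finset.mem_insert.mpr (Or.inl h.symm)
              · exact Finset.mem_insert.mpr (Or.inr (Finset.mem_filter.mpr ⟨hwMF, h⟩))
            · intro hw
              rcases Finset.mem_insert.mp hw with rfl | hw'
              · exact Finset.mem_filter.mpr ⟨hvMF, le_refl _⟩
              · obtain ⟨hwMF, hvw⟩ := Finset.mem_filter.mp hw'
                exact Finset.mem_filter.mpr ⟨hwMF, le_of_lt hvw⟩
          have hnm : v ∉ MF.filter (fun w => v < w) := by
            rw [Finset.mem_filter]
            rintro ⟨-, h⟩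
            exact lt_irrefl v h
          have hsum := SUM v hvM
          rw [hins2, Finset.sum_insert hnm] at hsum
          linarith [hsum]
      · rw [if_neg hvM]
        have hvCs : v ∉ Cs := fun h => hvM (hCM h)
        obtain ⟨w, hwS, hvw, hwcov⟩ := exists_coversIn_between' S (fun x h => h)
          (Finset.mem_coe.mpr hv) (Finset.mem_coe.mpr hxi) hvxi
        have hwCs : w ∈ Cs := hwcov
        have hKne : (CF.filter (fun c => v < c)).Nonempty :=
          ⟨w, Finset.mem_filter.mpr ⟨(memCF w).mpr hwCs,
            lt_of_le_of_ne hvw (fun h => hvM (h ▸ hCM hwCs))⟩⟩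
        set w0 := (CF.filter (fun c => v < c)).inf' hKne id with hw0def
        have hw0M : w0 ∈ M :=
          ⟨_, hKne, fun c hc => (memCF c).mp (Finset.mem_filter.mp (Finset.mem_coe.mp hc)).1,
            rfl⟩
        have hvw0 : v < w0 := by
          have hle : v ≤ w0 :=
            Finset.le_inf' hKne id (fun c hc => le_of_lt (Finset.mem_filter.mp hc).2)
          exact lt_of_le_of_ne hle (fun h => hvM (h ▸ hw0M))
        have hKeq : MF.filter (fun z => v < z) = MF.filter (fun z => w0 ≤ z) := by
          ext z
          constructor
          · intro hz0
            obtain ⟨hzMF, hvz⟩ := Finset.mem_filter.mp hz0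
            refine Finset.mem_filter.mpr ⟨hzMF, ?_⟩
            obtain ⟨F, hF, hFC, hzeq⟩ := (memMF z).mp hzMF
            rw [hzeq] at hvz ⊢
            refine Finset.le_inf' hF id ?_
            intro d hd
            have hdCs : d ∈ Cs := hFC (Finset.mem_coe.mpr hd)
            have hzd : F.inf' hF id ≤ d := Finset.inf'_le id hd
            have hdK : d ∈ CF.filter (fun c => v < c) :=
              Finset.mem_filter.mpr ⟨(memCF d).mpr hdCs, lt_of_lt_of_le hvz hzd⟩
            exact Finset.inf'_le id hdK
          · intro hz0
            obtain ⟨hzMF, hw0z⟩ := Finset.mem_filter.mp hz0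
            exact Finset.mem_filter.mpr ⟨hzMF, lt_of_lt_of_le hvw0 hw0z⟩
        rw [hKeq]
        have hs := SUM w0 hw0M
        rw [hs]
        norm_num
  have MAIN' : ∀ v, v ∈ S → v < xi → mu v xi = (if v ∈ M then g v else 0) :=
    fun v hv hvxi => MAIN _ v hv hvxi (le_refl _)
  refine ⟨hmu1 xi, ?_, ?_, ?_, ?_⟩
  · intro xj hj
    rw [MAIN' xj (Finset.mem_coe.mp (hCsS hj)) (hCslt xj hj), if_pos (hCM hj), hgdef]
    simp [hj]
  · intro xj hj
    have hjAB : xj ∈ A ∪ B := by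
      rcases hj with rfl | rfl
      · exact Or.inl hxa1
      · exact Or.inr hxb1
    have hjM := ((hABiff xj).mp hjAB).1
    have hjC := ((hABiff xj).mp hjAB).2
    rw [MAIN' xj (Finset.mem_coe.mp (hMS hjM)) (hMlt xj hjM), if_pos hjM, hgdef]
    simp only []
    rw [if_neg hjC, if_pos hj]
  · intro xj hjAB hne1 hne2
    have hjM := ((hABiff xj).mp hjAB).1
    have hjC := ((hABiff xj).mp hjAB).2
    rw [MAIN' xj (Finset.mem_coe.mp (hMS hjM)) (hMlt xj hjM), if_pos hjM, hgdef]
    simp only []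
    rw [if_neg hjC, if_neg (by rintro (rfl | rfl); exacts [hne1 rfl, hne2 rfl])]
    ring
  · intro xj hjS hne hjM
    by_cases hle : xj ≤ xi
    · rw [MAIN' xj hjS (lt_of_le_of_ne hle hne), if_neg hjM]
    · exact hmu0 xj xi hle
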